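/- Let R be a commutative O-algebra with π-derivation δ_R, and let B be a commutative R-algebra with π-derivation δ compatible with δ_R, i.e. δ(u(r)) = u(δ_R(r)) for all r ∈ R, where u : R → B is the structure map. Let a, b, a_1, …, a_k ∈ B and suppose a − b ∈ [a_1, …, a_k]. Then δ(a) − δ(b) ∈ [b, a_1, …, a_k, δ(a_1), …, δ(a_k)], i.e. δ(a) − δ(b) = G(b, a_1, …, a_k, δ(a_1), …, δ(a_k)) for some centered polynomial G ∈ R[T_0, T_1, …, T_{2k}]. -/

import Mathlib

open MvPolynomial

/-- A `π`-derivation on a commutative `O`-algebra `B`, relative to the polynomial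
`C ∈ O[X,Y]` satisfying `π·C = X^q + Y^q - (X+Y)^q`. -/
def IsPiDeriv {O : Type*} [CommRing O] (π : O) (q : ℕ) (C : MvPolynomial (Fin 2) O)
    {B : Type*} [CommRing B] [Algebra O B] (δ : B → B) : Prop :=
  δ 1 = 0 ∧
  (∀ x y : B, δ (x + y) = δ x + δ y + MvPolynomial.aeval ![x, y] C) ∧
  (∀ x y : B, δ (x * y) = x ^ q * δ y + y ^ q * δ x + algebraMap O B π * δ x * δ y)

/-- A polynomial is centered if it vanishes when all variables are set to `0`. -/
def Centered {R : Type*} [CommRing R] {σ : Type*} (F : MvPolynomial σ R) : Prop :=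
  MvPolynomial.eval (fun _ => (0 : R)) F = 0

/-- If `a - b ∈ [a_1, …, a_k]`, then
`δ(a) - δ(b) ∈ [b, a_1, …, a_k, δ(a_1), …, δ(a_k)]`. -/
theorem piDeriv_sub_of_centered_mem
    {O R B : Type*} [CommRing O] [CommRing R] [CommRing B]
    [Algebra O R] [Algebra O B] [Algebra R B] [IsScalarTower O R B]
    (π : O) (hπ : π ∈ nonZeroDivisors O) (q : ℕ) (hq : 1 ≤ q)
    (C : MvPolynomial (Fin 2) O)
    (hC : MvPolynomial.C π * C = X 0 ^ q + X 1 ^ q - (X 0 + X 1) ^ q)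
    (δR : R → R) (hδR : IsPiDeriv π q C δR)
    (δ : B → B) (hδ : IsPiDeriv π q C δ)
    (hcomp : ∀ r : R, δ (algebraMap R B r) = algebraMap R B (δR r))
    (k : ℕ) (a b : B) (av : Fin k → B)
    (hab : ∃ F : MvPolynomial (Fin k) R, Centered F ∧
      a - b = MvPolynomial.aeval av F) :
    ∃ G : MvPolynomial (Unit ⊕ Fin k ⊕ Fin k) R, Centered G ∧
      δ a - δ b =
        MvPolynomial.aeval
          (Sum.elim (fun _ => b) (Sum.elim av fun i => δ (av i))) G := by
  classical
  obtain ⟨F, hF, hFab⟩ := hab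
  set v : Unit ⊕ Fin k ⊕ Fin k → B :=
    Sum.elim (fun _ => b) (Sum.elim av fun i => δ (av i)) with hvdef
  set S : Set B :=
    {x | ∃ G : MvPolynomial (Unit ⊕ Fin k ⊕ Fin k) R, Centered G ∧ x = aeval v G}
    with hSdef
  set T : Set B :=
    Set.range (aeval v : MvPolynomial (Unit ⊕ Fin k ⊕ Fin k) R →ₐ[R] B) with hTdef
  -- basic facts about C
  have hCC0 : constantCoeff C = 0 := by
    have h1 : π * constantCoeff C = 0 := by
      have := congrArg constantCoeff hC
      simpa [zero_pow (Nat.one_le_iff_ne_zero.mp hq)] using this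
    exact hπ.2 _ (by rwa [mul_comm] at h1)
  have hδR0 : δR 0 = 0 := by
    have h := hδR.2.1 0 0
    have hv0 : (![(0:R), 0] : Fin 2 → R) = fun _ => 0 := by
      funext i; fin_cases i <;> simp
    rw [add_zero, hv0, aeval_zero', hCC0, map_zero, add_zero] at h
    linear_combination -h
  -- closure properties of S and T
  have hS0 : (0 : B) ∈ S := ⟨0, by simp [Centered], by simp⟩
  have hSadd : ∀ {x y : B}, x ∈ S → y ∈ S → x + y ∈ S := by
    rintro x y ⟨Gx, hGx, rfl⟩ ⟨Gy, hGy, rfl⟩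
    exact ⟨Gx + Gy, by simp [Centered] at *; simp [hGx, hGy], by simp⟩
  have hSmul : ∀ {x y : B}, x ∈ S → y ∈ T → x * y ∈ S := by
    rintro x y ⟨Gx, hGx, rfl⟩ ⟨Hy, rfl⟩
    exact ⟨Gx * Hy, by simp [Centered] at *; simp [hGx], by simp⟩
  have hST : S ⊆ T := by rintro x ⟨Gx, _, rfl⟩; exact ⟨Gx, rfl⟩
  have hTadd : ∀ {x y : B}, x ∈ T → y ∈ T → x + y ∈ T := by
    rintro x y ⟨Hx, rfl⟩ ⟨Hy, rfl⟩; exact ⟨Hx + Hy, by simp⟩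
  have hTmul : ∀ {x y : B}, x ∈ T → y ∈ T → x * y ∈ T := by
    rintro x y ⟨Hx, rfl⟩ ⟨Hy, rfl⟩; exact ⟨Hx * Hy, by simp⟩
  have hvS : ∀ i, v i ∈ S := fun i =>
    ⟨X i, by simp [Centered], by simp⟩
  have hbS : b ∈ S := hvS (Sum.inl ())
  have havS : ∀ j, av j ∈ S := fun j => hvS (Sum.inr (Sum.inl j))
  have hδavS : ∀ j, δ (av j) ∈ S := fun j => hvS (Sum.inr (Sum.inr j))
  have havT : ∀ j, av j ∈ T := fun j => hST (havS j)
  have halgT : ∀ r : R, algebraMap R B r ∈ T := fun r =>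
    ⟨MvPolynomial.C r, by simp⟩
  have hTeval : ∀ {ι : Type} (x : ι → B), (∀ i, x i ∈ T) →
      ∀ p : MvPolynomial ι R, aeval x p ∈ T := by
    intro ι x hx p
    choose H hH using hx
    refine ⟨bind₁ H p, ?_⟩
    rw [show ((aeval v : MvPolynomial (Unit ⊕ Fin k ⊕ Fin k) R →ₐ[R] B) : _ → B)
      = aeval v from rfl, aeval_bind₁]
    simp only [hH]
  have hTevalO : ∀ (x : Fin 2 → B), (∀ i, x i ∈ T) →
      ∀ D : MvPolynomial (Fin 2) O, aeval x D ∈ T := by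
    intro x hx D
    rw [← aeval_map_algebraMap R]
    exact hTeval x hx _
  -- congruence for evaluation of O-polynomials
  have hcong : ∀ (D : MvPolynomial (Fin 2) O) (x y : Fin 2 → B),
      (∀ i, x i - y i ∈ S) → (∀ i, x i ∈ T) → (∀ i, y i ∈ T) →
      aeval x D - aeval y D ∈ S := by
    intro D x y hxy hxT hyT
    induction D using MvPolynomial.induction_on with
    | C r => simpa using hS0
    | add p p' ihp ihp' =>
      have := hSadd ihp ihp'
      have heq : aeval x (p + p') - aeval y (p + p')
          = (aeval x p - aeval y p) + (aeval x p' - aeval y p') := by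
        simp only [map_add]; ring
      rw [heq]; exact this
    | mul_X p n ihp =>
      have heq : aeval x (p * X n) - aeval y (p * X n)
          = (x n - y n) * aeval x p + (aeval x p - aeval y p) * y n := by
        simp only [map_mul, aeval_X]; ring
      rw [heq]
      exact hSadd (hSmul (hxy n) (hTevalO x hxT p)) (hSmul ihp (hyT n))
  -- the main induction
  have hL : ∀ p : MvPolynomial (Fin k) R,
      δ (aeval av p) - algebraMap R B (δR (eval (fun _ => (0:R)) p)) ∈ S ∧
      aeval av p - algebraMap R B (eval (fun _ => (0:R)) p) ∈ S := by
    intro p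
    induction p using MvPolynomial.induction_on with
    | C r =>
      constructor
      · rw [aeval_C, hcomp, eval_C]; simpa using hS0
      · rw [aeval_C, eval_C]; simpa using hS0
    | add p p' ihp ihp' =>
      have hmapC : algebraMap R B (aeval ![eval (fun _ => (0:R)) p,
            eval (fun _ => (0:R)) p'] C)
          = aeval ![algebraMap R B (eval (fun _ => (0:R)) p),
            algebraMap R B (eval (fun _ => (0:R)) p')] C := by
        have h := comp_aeval_apply (φ := IsScalarTower.toAlgHom O R B)
          (f := ![eval (fun _ => (0:R)) p, eval (fun _ => (0:R)) p']) (p := C)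
        have h2 : (fun i => (IsScalarTower.toAlgHom O R B)
              ((![eval (fun _ => (0:R)) p, eval (fun _ => (0:R)) p'] : Fin 2 → R) i))
            = ![algebraMap R B (eval (fun _ => (0:R)) p),
                algebraMap R B (eval (fun _ => (0:R)) p')] := by
          funext i; fin_cases i <;> simp
        rw [h2] at h
        exact h
      constructor
      · have heq : δ (aeval av (p + p'))
            - algebraMap R B (δR (eval (fun _ => (0:R)) (p + p')))
            = (δ (aeval av p) - algebraMap R B (δR (eval (fun _ => (0:R)) p)))
            + (δ (aeval av p') - algebraMap R B (δR (eval (fun _ => (0:R)) p')))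
            + (aeval ![aeval av p, aeval av p'] C
              - aeval ![algebraMap R B (eval (fun _ => (0:R)) p),
                  algebraMap R B (eval (fun _ => (0:R)) p')] C) := by
          rw [map_add, hδ.2.1, map_add, hδR.2.1, map_add, map_add, ← hmapC]
          ring
        rw [heq]
        refine hSadd (hSadd ihp.1 ihp'.1) ?_
        refine hcong C _ _ ?_ ?_ ?_
        · intro i; fin_cases i
          · simpa using ihp.2
          · simpa using ihp'.2
        · intro i; fin_cases i
          · simpa using hTeval av havT p
          · simpa using hTeval av havT p'
        · intro i; fin_cases i
          · simpa using halgT (eval (fun _ => (0:R)) p)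
          · simpa using halgT (eval (fun _ => (0:R)) p')
      · have heq : aeval av (p + p')
            - algebraMap R B (eval (fun _ => (0:R)) (p + p'))
            = (aeval av p - algebraMap R B (eval (fun _ => (0:R)) p))
            + (aeval av p' - algebraMap R B (eval (fun _ => (0:R)) p')) := by
          simp only [map_add]; ring
        rw [heq]; exact hSadd ihp.2 ihp'.2
    | mul_X p n ihp =>
      have hev0 : eval (fun _ => (0:R)) (p * X n) = 0 := by simp
      have havnqS : av n ^ q ∈ S := by
        obtain ⟨q', rfl⟩ := Nat.exists_eq_add_of_le hq
        rw [add_comm, pow_succ']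
        refine hSmul (havS n) ?_
        obtain ⟨G, hGe⟩ := hST (havS n)
        exact ⟨G ^ q', by rw [map_pow, hGe]⟩
      constructor
      · rw [hev0, hδR0, map_zero, sub_zero, map_mul, aeval_X, hδ.2.2]
        have hδpT : δ (aeval av p) ∈ T := by
          have : δ (aeval av p)
              = algebraMap R B (δR (eval (fun _ => (0:R)) p))
              + (δ (aeval av p) - algebraMap R B (δR (eval (fun _ => (0:R)) p))) := by
            ring
          rw [this]
          exact hTadd (halgT _) (hST ihp.1)
        refine hSadd (hSadd ?_ ?_) ?_
        · rw [show aeval av p ^ q * δ (av n) = δ (av n) * aeval av p ^ q by ring]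
          refine hSmul (hδavS n) ?_
          rw [← map_pow]
          exact hTeval av havT (p ^ q)
        · exact hSmul havnqS hδpT
        · rw [show algebraMap O B π * δ (aeval av p) * δ (av n)
              = δ (av n) * (algebraMap O B π * δ (aeval av p)) by ring]
          refine hSmul (hδavS n) (hTmul ?_ hδpT)
          rw [IsScalarTower.algebraMap_apply O R B]
          exact halgT _
      · rw [hev0, map_zero, sub_zero, map_mul, aeval_X, mul_comm]
        exact hSmul (havS n) (hTeval av havT p)
  -- assemble
  have ha : a = b + aeval av F := by linear_combination hFab
  have hδtS : δ (aeval av F) ∈ S := by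
    have := (hL F).1
    rwa [hF, hδR0, map_zero, sub_zero] at this
  have htS : aeval av F ∈ S := by
    have := (hL F).2
    rwa [hF, map_zero, sub_zero] at this
  have hCbtS : aeval ![b, aeval av F] C ∈ S := by
    have h0 : aeval (fun _ => (0:B)) C = 0 := by
      rw [aeval_zero', hCC0, map_zero]
    have := hcong C ![b, aeval av F] (fun _ => 0)
      (by intro i; fin_cases i
          · simpa using hbS
          · simpa using htS)
      (by intro i; fin_cases i
          · simpa using hST hbS
          · simpa using hST htS)
      (by intro i; exact ⟨0, by simp⟩)
    rwa [h0, sub_zero] at this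
  have key : δ a - δ b = δ (aeval av F) + aeval ![b, aeval av F] C := by
    rw [ha, hδ.2.1]; ring
  rw [key]
  exact hSadd hδtS hCbtS
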